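/- In every Heyting algebra, for all elements x and y, if □x ≤ ((z → x) → z) → z holds for all z (where □ is a unary operation), then □x ≤ y ∨ (y → x). -/
import Mathlib

theorem stmt_2 {H : Type*} [HeytingAlgebra H] (box : H → H)
    (h : ∀ x z : H, box x ≤ ((z ⇨ x) ⇨ z) ⇨ z) :
    ∀ x y : H, box x ≤ y ⊔ (y ⇨ x) := by
  intro x y
  set z := y ⊔ (y ⇨ x) with hz
  have hle : z ⇨ x ≤ z := by
    calc z ⇨ x ≤ y ⇨ x := himp_le_himp_right le_sup_left
    _ ≤ z := le_sup_right
  have htop : ((z ⇨ x) ⇨ z) = ⊤ := himp_eq_top_iff.mpr hle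
  have := h x z
  rwa [htop, top_himp] at this
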